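/- For every natural number n there is a quasi-embedding from S^s_{n+1} into the product S^s_n ⊗ S^w_{n+1}, given by splitting a sequence s = s_l * s_r at the first occurrence of 0 (s_l the maximal prefix of positive members) and mapping s to (s_l with members decremented, s_r). -/

import Mathlib

/-- The weak gap condition on finite sequences over a linear order. -/
def WeakGap {α : Type*} [LinearOrder α] (s t : List α) : Prop :=
  ∃ f : Fin s.length → Fin t.length,
    StrictMono f ∧
    (∀ i, s.get i ≤ t.get (f i)) ∧
    ∀ (i : ℕ) (h : i + 1 < s.length) (j : Fin t.length),
      f ⟨i, Nat.lt_of_succ_lt h⟩ < j → j < f ⟨i + 1, h⟩ → s.get ⟨i + 1, h⟩ ≤ t.get j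

/-- The strong gap condition on finite sequences over a linear order:
as the weak one, but additionally respecting the outer gap. -/
def StrongGap {α : Type*} [LinearOrder α] (s t : List α) : Prop :=
  ∃ f : Fin s.length → Fin t.length,
    StrictMono f ∧
    (∀ i, s.get i ≤ t.get (f i)) ∧
    (∀ (i : ℕ) (h : i + 1 < s.length) (j : Fin t.length),
      f ⟨i, Nat.lt_of_succ_lt h⟩ < j → j < f ⟨i + 1, h⟩ → s.get ⟨i + 1, h⟩ ≤ t.get j) ∧
    ∀ (h : 0 < s.length) (j : Fin t.length), j < f ⟨0, h⟩ → s.get ⟨0, h⟩ ≤ t.get j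

/-- Splitting a sequence over `{0, …, n}` at the first occurrence of `0` and
decrementing the members of the prefix yields a quasi-embedding from
`S^s_{n+1}` into the product `S^s_n ⊗ S^w_{n+1}`. -/
theorem getElem_congr_idx' {α : Type*} (l : List α) {i j : ℕ} (h : i = j)
    (hj : j < l.length) : l[i]'(h ▸ hj) = l[j] := by subst h; rfl

set_option maxHeartbeats 1600000 in
theorem strongGap_quasiEmbeds_into_product (n : ℕ) :
    (∀ s : List ℕ, (∀ x ∈ s, x < n + 1) →
      ∀ x ∈ (s.takeWhile (· ≠ 0)).map (· - 1), x < n) ∧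
    (∀ s t : List ℕ, (∀ x ∈ s, x < n + 1) → (∀ x ∈ t, x < n + 1) →
      StrongGap ((s.takeWhile (· ≠ 0)).map (· - 1))
          ((t.takeWhile (· ≠ 0)).map (· - 1)) →
        WeakGap (s.dropWhile (· ≠ 0)) (t.dropWhile (· ≠ 0)) →
          StrongGap s t) := by
  constructor
  · intro s hs x hx
    simp only [List.mem_map] at hx
    obtain ⟨y, hy, rfl⟩ := hx
    have h1 : y ∈ s := (List.takeWhile_prefix _).subset hy
    have h2 := List.mem_takeWhile_imp hy
    simp only [ne_eq, decide_not, Bool.not_eq_true', decide_eq_false_iff_not] at h2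
    have := hs y h1
    omega
  · intro s t hsb htb hstrong hweak
    set s1 := s.takeWhile (· ≠ 0) with hs1def
    set s2 := s.dropWhile (· ≠ 0) with hs2def
    set t1 := t.takeWhile (· ≠ 0) with ht1def
    set t2 := t.dropWhile (· ≠ 0) with ht2def
    have hsapp : s1 ++ s2 = s := List.takeWhile_append_dropWhile
    have htapp : t1 ++ t2 = t := List.takeWhile_append_dropWhile
    have hslen : s.length = s1.length + s2.length := by
      rw [← hsapp, List.length_append]
    have htlen : t.length = t1.length + t2.length := by
      rw [← htapp, List.length_append]
    have hs1pos : ∀ (i : ℕ) (h : i < s1.length), 1 ≤ s1[i] := by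
      intro i h
      have h2 := List.mem_takeWhile_imp (List.getElem_mem h)
      simp only [ne_eq, decide_not, Bool.not_eq_true', decide_eq_false_iff_not] at h2
      omega
    have ht1pos : ∀ (i : ℕ) (h : i < t1.length), 1 ≤ t1[i] := by
      intro i h
      have h2 := List.mem_takeWhile_imp (List.getElem_mem h)
      simp only [ne_eq, decide_not, Bool.not_eq_true', decide_eq_false_iff_not] at h2
      omega
    have hs2zero : ∀ (h : 0 < s2.length), s2[0] = 0 := by
      intro h
      have hne : s2 ≠ [] := List.ne_nil_of_length_pos h
      have h0 : decide (s2.head hne ≠ 0) = false :=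
        List.head_dropWhile_not (fun x : ℕ => decide (x ≠ 0)) hne
      rw [List.getElem_zero h]
      simpa using h0
    have hsget1 : ∀ (i : ℕ) (hi : i < s.length) (h : i < s1.length), s[i] = s1[i] := by
      intro i hi h
      rw [List.getElem_of_eq hsapp.symm hi, List.getElem_append_left h]
    have hsget2 : ∀ (i : ℕ) (hi : i < s.length) (h : s1.length ≤ i),
        s[i] = s2[i - s1.length]'(by omega) := by
      intro i hi h
      rw [List.getElem_of_eq hsapp.symm hi, List.getElem_append_right h]
    have htget1 : ∀ (i : ℕ) (hi : i < t.length) (h : i < t1.length), t[i] = t1[i] := by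
      intro i hi h
      rw [List.getElem_of_eq htapp.symm hi, List.getElem_append_left h]
    have htget2 : ∀ (i : ℕ) (hi : i < t.length) (h : t1.length ≤ i),
        t[i] = t2[i - t1.length]'(by omega) := by
      intro i hi h
      rw [List.getElem_of_eq htapp.symm hi, List.getElem_append_right h]
    obtain ⟨f, hfmono, hfle, hfgap, hfouter⟩ := hstrong
    obtain ⟨g, hgmono, hgle, hggap⟩ := hweak
    have hms : (s1.map (· - 1)).length = s1.length := List.length_map _
    have hmt : (t1.map (· - 1)).length = t1.length := List.length_map _
    -- a total, proof-free version of f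
    set f' : ℕ → ℕ := fun i => if h : i < s1.length then (f ⟨i, hms ▸ h⟩).1 else 0
      with hf'def
    have hf'eq : ∀ (i : ℕ) (h : i < s1.length), f' i = (f ⟨i, hms ▸ h⟩).1 := by
      intro i h
      simp only [hf'def, dif_pos h]
    have hf'lt : ∀ (i : ℕ), i < s1.length → f' i < t1.length := by
      intro i h
      rw [hf'eq i h]
      have := (f ⟨i, hms ▸ h⟩).isLt
      omega
    have hf'mono : ∀ (i j : ℕ), j < s1.length → i < j → f' i < f' j := by
      intro i j hj hij
      rw [hf'eq i (by omega), hf'eq j hj]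
      exact hfmono (show (⟨i, _⟩ : Fin _) < ⟨j, _⟩ from Fin.mk_lt_mk.mpr hij)
    have hf'le : ∀ (i : ℕ) (h : i < s1.length), s1[i] ≤ t1[f' i]'(hf'lt i h) := by
      intro i h
      have h1 := hs1pos i h
      have h2 := ht1pos (f' i) (hf'lt i h)
      have key : s1[i] - 1 ≤ t1[f' i]'(hf'lt i h) - 1 := by
        have := hfle ⟨i, hms ▸ h⟩
        simp only [List.get_eq_getElem, List.getElem_map] at this
        rw [getElem_congr_idx' t1 (hf'eq i h) (by have := (f ⟨i, hms ▸ h⟩).isLt; omega)]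
        exact this
      omega
    have hf'gap : ∀ (i : ℕ) (h : i + 1 < s1.length) (j : ℕ) (hj : j < t1.length),
        f' i < j → j < f' (i+1) → s1[i+1]'(by omega) ≤ t1[j] := by
      intro i h j hj h1 h2
      rw [hf'eq i (by omega)] at h1
      rw [hf'eq (i+1) h] at h2
      have := hfgap i (by omega) ⟨j, by omega⟩ (Fin.mk_lt_mk.mpr h1) (Fin.mk_lt_mk.mpr h2)
      simp only [List.get_eq_getElem, List.getElem_map] at this
      have p1 := hs1pos (i+1) h
      have p2 := ht1pos j hj
      omega
    have hf'outer : ∀ (h : 0 < s1.length) (j : ℕ) (hj : j < t1.length),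
        j < f' 0 → s1[0] ≤ t1[j] := by
      intro h j hj h1
      rw [hf'eq 0 h] at h1
      have := hfouter (by omega) ⟨j, by omega⟩ (Fin.mk_lt_mk.mpr h1)
      simp only [List.get_eq_getElem, List.getElem_map] at this
      have p1 := hs1pos 0 h
      have p2 := ht1pos j hj
      omega
    -- a total, proof-free version of g
    set g' : ℕ → ℕ := fun i => if h : i < s2.length then (g ⟨i, h⟩).1 else 0 with hg'def
    have hg'eq : ∀ (i : ℕ) (h : i < s2.length), g' i = (g ⟨i, h⟩).1 := by
      intro i h
      simp only [hg'def, dif_pos h]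
    have hg'lt : ∀ (i : ℕ), i < s2.length → g' i < t2.length := by
      intro i h
      rw [hg'eq i h]
      exact (g ⟨i, h⟩).isLt
    have hg'mono : ∀ (i j : ℕ), j < s2.length → i < j → g' i < g' j := by
      intro i j hj hij
      rw [hg'eq i (by omega), hg'eq j hj]
      exact hgmono (Fin.mk_lt_mk.mpr hij)
    have hg'le : ∀ (i : ℕ) (h : i < s2.length), s2[i] ≤ t2[g' i]'(hg'lt i h) := by
      intro i h
      have := hgle ⟨i, h⟩
      simp only [List.get_eq_getElem] at this
      rw [getElem_congr_idx' t2 (hg'eq i h) (g ⟨i, h⟩).isLt]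
      exact this
    have hg'gap : ∀ (i : ℕ) (h : i + 1 < s2.length) (j : ℕ) (hj : j < t2.length),
        g' i < j → j < g' (i+1) → s2[i+1]'(by omega) ≤ t2[j] := by
      intro i h j hj h1 h2
      rw [hg'eq i (by omega)] at h1
      rw [hg'eq (i+1) h] at h2
      have := hggap i h ⟨j, hj⟩ (Fin.mk_lt_mk.mpr h1) (Fin.mk_lt_mk.mpr h2)
      simpa using this
    -- the combined embedding, as a total map on ℕ
    set Fv : ℕ → ℕ := fun i =>
      if i < s1.length then f' i else t1.length + g' (i - s1.length) with hFvdef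
    have hFv1 : ∀ (i : ℕ), i < s1.length → Fv i = f' i := by
      intro i h
      simp only [hFvdef, if_pos h]
    have hFv2 : ∀ (i : ℕ), s1.length ≤ i → Fv i = t1.length + g' (i - s1.length) := by
      intro i h
      simp only [hFvdef, if_neg (Nat.not_lt.mpr h)]
    have hFvlt : ∀ (i : ℕ), i < s.length → Fv i < t.length := by
      intro i hi
      by_cases h : i < s1.length
      · rw [hFv1 i h]
        have := hf'lt i h
        omega
      · rw [hFv2 i (by omega)]
        have := hg'lt (i - s1.length) (by omega)
        omega
    refine ⟨fun i => ⟨Fv i.1, hFvlt i.1 i.2⟩, ?_, ?_, ?_, ?_⟩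
    · -- StrictMono
      rintro ⟨a, ha⟩ ⟨b, hb⟩ hab
      have hab' : a < b := hab
      show Fv a < Fv b
      by_cases hpa : a < s1.length
      · by_cases hpb : b < s1.length
        · rw [hFv1 a hpa, hFv1 b hpb]
          exact hf'mono a b hpb hab'
        · rw [hFv1 a hpa, hFv2 b (by omega)]
          have := hf'lt a hpa
          omega
      · rw [hFv2 a (by omega), hFv2 b (by omega)]
        have := hg'mono (a - s1.length) (b - s1.length) (by omega) (by omega)
        omega
    · -- le
      rintro ⟨i, hi⟩
      simp only [List.get_eq_getElem]
      by_cases h : i < s1.length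
      · rw [hsget1 i hi h, htget1 (Fv i) (hFvlt i hi) (by have := hf'lt i h; rw [hFv1 i h]; omega)]
        rw [getElem_congr_idx' t1 (hFv1 i h) (hf'lt i h)]
        exact hf'le i h
      · rw [hsget2 i hi (by omega), htget2 (Fv i) (hFvlt i hi)
          (by rw [hFv2 i (by omega)]; omega)]
        rw [getElem_congr_idx' t2
          (show Fv i - t1.length = g' (i - s1.length) from by rw [hFv2 i (by omega)]; omega)
          (hg'lt (i - s1.length) (by omega))]
        exact hg'le (i - s1.length) (by omega)
    · -- gap
      intro i h j hj1 hj2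
      obtain ⟨jv, hjv⟩ := j
      simp only [List.get_eq_getElem]
      have hj1' : Fv i < jv := hj1
      have hj2' : jv < Fv (i+1) := hj2
      clear hj1 hj2
      by_cases h1 : i + 1 < s1.length
      · rw [hFv1 i (by omega)] at hj1'
        rw [hFv1 (i+1) h1] at hj2'
        have hjt1 : jv < t1.length := by have := hf'lt (i+1) h1; omega
        rw [hsget1 (i+1) h h1, htget1 jv hjv hjt1]
        exact hf'gap i h1 jv hjt1 hj1' hj2'
      · by_cases h2 : i < s1.length
        · have hlen2 : 0 < s2.length := by omega
          rw [hsget2 (i+1) h (by omega)]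
          rw [getElem_congr_idx' s2 (show i + 1 - s1.length = 0 from by omega) hlen2]
          rw [hs2zero hlen2]
          exact Nat.zero_le _
        · rw [hFv2 i (by omega)] at hj1'
          rw [hFv2 (i+1) (by omega)] at hj2'
          have hk : i + 1 - s1.length = i - s1.length + 1 := by omega
          rw [hk] at hj2'
          have hk2 : i - s1.length + 1 < s2.length := by omega
          have hjt : t1.length ≤ jv := by omega
          have hjlt : jv - t1.length < t2.length := by
            have := hg'lt (i - s1.length + 1) hk2
            omega
          have key := hg'gap (i - s1.length) hk2 (jv - t1.length) hjlt (by omega) (by omega)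
          rw [hsget2 (i+1) h (by omega), htget2 jv hjv hjt]
          rw [getElem_congr_idx' s2 hk hk2]
          exact key
    · -- outer
      intro h j hj
      obtain ⟨jv, hjv⟩ := j
      simp only [List.get_eq_getElem]
      have hj' : jv < Fv 0 := hj
      clear hj
      by_cases h1 : 0 < s1.length
      · rw [hFv1 0 h1] at hj'
        have hjt1 : jv < t1.length := by have := hf'lt 0 h1; omega
        rw [hsget1 0 h h1, htget1 jv hjv hjt1]
        exact hf'outer h1 jv hjt1 hj'
      · have hlen2 : 0 < s2.length := by omega
        rw [hsget2 0 h (by omega)]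
        rw [getElem_congr_idx' s2 (show 0 - s1.length = 0 from by omega) hlen2]
        rw [hs2zero hlen2]
        exact Nat.zero_le _
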